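/- arXiv:1610.09600 — 4 statements merged into one kernel-verified Lean document; each statement's English description precedes it below -/
import Mathlib

section
/- For the Hann window with Fourier transform w̃(ν) = (T/2)·e^{-iπTν}·sinc(Tν)/(1-(Tν)²) (suitably interpreted at Tν ∈ {0, ±1}), the bounds (1/2)(1 - (3/2)(Tν)²) ≤ |w̃(ν)|/T ≤ (1/2)(1 - (1/4)(Tν)²) hold for all ν with |Tν| ≤ 2/√3. -/
set_option maxHeartbeats 800000

open Real Complex

/-- The Fourier transform of the Hann window `w(t) = sin²(πt/T)·1_[0,T](t)`. -/
noncomputable def hannFT (T : ℝ) (ν : ℝ) : ℂ :=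
  ∫ t in (0:ℝ)..T, Complex.exp (-2 * Real.pi * Complex.I * ν * t) * ((Real.sin (Real.pi * t / T) : ℂ)) ^ 2


lemma my_sin_ge_sub_cube {v : ℝ} (hv : 0 ≤ v) : v - v ^ 3 / 6 ≤ Real.sin v := by
  have hder : ∀ x : ℝ, HasDerivAt (fun x : ℝ => Real.sin x - x + x ^ 3 / 6)
      (Real.cos x - 1 + x ^ 2 / 2) x := by
    intro x
    have h := ((Real.hasDerivAt_sin x).sub (hasDerivAt_id x)).add ((hasDerivAt_pow 3 x).div_const 6)
    refine h.congr_deriv ?_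
    push_cast; ring
  have mono : MonotoneOn (fun x : ℝ => Real.sin x - x + x ^ 3 / 6) (Set.Ici 0) := by
    apply monotoneOn_of_deriv_nonneg (convex_Ici 0)
    · exact (Continuous.continuousOn (by fun_prop))
    · intro x _; exact (hder x).differentiableAt.differentiableWithinAt
    · intro x _
      rw [(hder x).deriv]
      nlinarith [Real.one_sub_sq_div_two_le_cos (x := x)]
  have h0 := mono (Set.self_mem_Ici) (Set.mem_Ici.mpr hv) hv
  simp at h0
  linarith

lemma my_cos_le_quartic {u : ℝ} (hu : u ^ 2 ≤ 24) :
    Real.cos u ≤ 1 - u ^ 2 / 2 + u ^ 4 / 24 := by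
  wlog h : 0 ≤ u with H
  · have := H (u := -u) (by nlinarith) (by linarith)
    rw [Real.cos_neg] at this
    calc Real.cos u ≤ 1 - (-u)^2/2 + (-u)^4/24 := this
    _ = 1 - u^2/2 + u^4/24 := by ring
  · set v := u / 2 with hvdef
    have hv0 : 0 ≤ v := by positivity
    have hv6 : v ^ 2 ≤ 6 := by rw [hvdef]; nlinarith
    have h1 : v - v ^ 3 / 6 ≤ Real.sin v := my_sin_ge_sub_cube hv0
    have h2 : 0 ≤ v - v ^ 3 / 6 := by nlinarith
    have h3 : (v - v ^ 3 / 6) ^ 2 ≤ Real.sin v ^ 2 := by nlinarith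
    have h4 : Real.cos u = 1 - 2 * Real.sin v ^ 2 := by
      rw [show u = 2 * v by rw [hvdef]; ring, Real.cos_two_mul', Real.cos_sq']
      ring
    rw [h4, show u = 2 * v by rw [hvdef]; ring]
    nlinarith [h3, sq_nonneg v, sq_nonneg (v ^ 3)]

lemma my_cos2pi (s : ℝ) : Real.cos (2 * π * s) = 1 - 2 * Real.sin (π * s) ^ 2 := by
  rw [show 2 * π * s = 2 * (π * s) by ring, Real.cos_two_mul', Real.cos_sq']
  ring

lemma my_hd_sin (s : ℝ) : HasDerivAt (fun s : ℝ => Real.sin (2 * π * s))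
    (2 * π * Real.cos (2 * π * s)) s := by
  have h := (Real.hasDerivAt_sin (2 * π * s)).comp s ((hasDerivAt_id s).const_mul (2 * π))
  refine h.congr_deriv ?_
  simp; ring

lemma my_hd_cos (s : ℝ) : HasDerivAt (fun s : ℝ => Real.cos (2 * π * s))
    (-(2 * π * Real.sin (2 * π * s))) s := by
  have h := (Real.hasDerivAt_cos (2 * π * s)).comp s ((hasDerivAt_id s).const_mul (2 * π))
  refine h.congr_deriv ?_
  simp; ring

lemma my_hd_pow (n : ℕ) (s : ℝ) : HasDerivAt (fun s : ℝ => (s - 1/2) ^ n)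
    (n * (s - 1/2) ^ (n - 1)) s := by
  have h := (((hasDerivAt_id s).sub_const (1/2)).pow n)
  refine h.congr_deriv ?_
  simp only [id_eq]
  ring

lemma my_I0 : ∫ s in (0:ℝ)..1, Real.sin (π * s) ^ 2 = 1 / 2 := by
  have key : ∀ s : ℝ, HasDerivAt (fun s : ℝ => s / 2 - Real.sin (2 * π * s) / (4 * π))
      (Real.sin (π * s) ^ 2) s := by
    intro s
    have h := ((hasDerivAt_id s).div_const 2).sub ((my_hd_sin s).div_const (4 * π))
    refine h.congr_deriv ?_
    have hc := my_cos2pi s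
    have hπ := Real.pi_ne_zero
    try simp only [id_eq]
    rw [hc]
    field_simp
    ring
  rw [intervalIntegral.integral_eq_sub_of_hasDerivAt (fun s _ => key s)
    ((by fun_prop : Continuous fun s : ℝ => Real.sin (π * s) ^ 2).intervalIntegrable 0 1)]
  have hπ := Real.pi_ne_zero
  simp [Real.sin_two_pi]

lemma my_I2 : ∫ s in (0:ℝ)..1, (s - 1/2) ^ 2 * Real.sin (π * s) ^ 2
    = 1 / 24 - 1 / (4 * π ^ 2) := by
  have key : ∀ s : ℝ, HasDerivAt (fun s : ℝ => (s - 1/2) ^ 3 / 6 -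
      ((s - 1/2) ^ 2 * Real.sin (2 * π * s) / (4 * π)
        + (s - 1/2) * Real.cos (2 * π * s) / (4 * π ^ 2)
        - Real.sin (2 * π * s) / (8 * π ^ 3)))
      ((s - 1/2) ^ 2 * Real.sin (π * s) ^ 2) s := by
    intro s
    have h := ((my_hd_pow 3 s).div_const 6).sub
      (((((my_hd_pow 2 s).mul (my_hd_sin s)).div_const (4 * π)).add
        ((((hasDerivAt_id s).sub_const (1/2)).mul (my_hd_cos s)).div_const (4 * π ^ 2))).sub
        ((my_hd_sin s).div_const (8 * π ^ 3)))
    refine h.congr_deriv ?_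
    have hc := my_cos2pi s
    have hπ := Real.pi_ne_zero
    try simp only [id_eq]
    rw [hc]
    field_simp
    ring
  rw [intervalIntegral.integral_eq_sub_of_hasDerivAt (fun s _ => key s)
    ((by fun_prop : Continuous fun s : ℝ => (s - 1/2) ^ 2 * Real.sin (π * s) ^ 2).intervalIntegrable 0 1)]
  have hπ := Real.pi_ne_zero
  norm_num [Real.sin_two_pi, Real.cos_two_pi]
  field_simp
  ring

lemma my_I4 : ∫ s in (0:ℝ)..1, (s - 1/2) ^ 4 * Real.sin (π * s) ^ 2
    = 1 / 160 - 1 / (8 * π ^ 2) + 3 / (4 * π ^ 4) := by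
  have key : ∀ s : ℝ, HasDerivAt (fun s : ℝ => (s - 1/2) ^ 5 / 10 -
      ((s - 1/2) ^ 4 * Real.sin (2 * π * s) / (4 * π)
        + (s - 1/2) ^ 3 * Real.cos (2 * π * s) / (2 * π ^ 2)
        - 3 * ((s - 1/2) ^ 2 * Real.sin (2 * π * s)) / (4 * π ^ 3)
        - 3 * ((s - 1/2) * Real.cos (2 * π * s)) / (4 * π ^ 4)
        + 3 * Real.sin (2 * π * s) / (8 * π ^ 5)))
      ((s - 1/2) ^ 4 * Real.sin (π * s) ^ 2) s := by
    intro s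
    have h := ((my_hd_pow 5 s).div_const 10).sub
      (((((((my_hd_pow 4 s).mul (my_hd_sin s)).div_const (4 * π)).add
        (((my_hd_pow 3 s).mul (my_hd_cos s)).div_const (2 * π ^ 2))).sub
        ((((my_hd_pow 2 s).mul (my_hd_sin s)).const_mul 3).div_const (4 * π ^ 3))).sub
        (((((hasDerivAt_id s).sub_const (1/2)).mul (my_hd_cos s)).const_mul 3).div_const (4 * π ^ 4))).add
        (((my_hd_sin s).const_mul 3).div_const (8 * π ^ 5)))
    refine h.congr_deriv ?_
    have hc := my_cos2pi s
    have hπ := Real.pi_ne_zero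
    try simp only [id_eq]
    rw [hc]
    field_simp
    ring
  rw [intervalIntegral.integral_eq_sub_of_hasDerivAt (fun s _ => key s)
    ((by fun_prop : Continuous fun s : ℝ => (s - 1/2) ^ 4 * Real.sin (π * s) ^ 2).intervalIntegrable 0 1)]
  have hπ := Real.pi_ne_zero
  norm_num [Real.sin_two_pi, Real.cos_two_pi]
  field_simp
  ring


noncomputable def hannG (x : ℝ) : ℂ :=
  ∫ s in (0:ℝ)..1, Complex.exp (-2 * Real.pi * Complex.I * x * s) * ((Real.sin (Real.pi * s) : ℂ)) ^ 2

noncomputable def hannH (x : ℝ) : ℝ :=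
  ∫ s in (0:ℝ)..1, Real.cos (2 * π * x * (s - 1/2)) * Real.sin (π * s) ^ 2

lemma hannK_zero (x : ℝ) :
    ∫ s in (0:ℝ)..1, Real.sin (2 * π * x * (s - 1/2)) * Real.sin (π * s) ^ 2 = 0 := by
  set f : ℝ → ℝ := fun s => Real.sin (2 * π * x * (s - 1/2)) * Real.sin (π * s) ^ 2 with hf
  have h1 : (∫ s in (0:ℝ)..1, f (1 - s)) = ∫ s in (0:ℝ)..1, f s := by
    rw [intervalIntegral.integral_comp_sub_left f 1]
    norm_num
  have h2 : ∀ s : ℝ, f (1 - s) = -f s := by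
    intro s
    simp only [hf]
    have e1 : 2 * π * x * (1 - s - 1/2) = -(2 * π * x * (s - 1/2)) := by ring
    have e2 : π * (1 - s) = π - π * s := by ring
    rw [e1, e2, Real.sin_neg, Real.sin_pi_sub]
    ring
  have h3 : (∫ s in (0:ℝ)..1, f (1 - s)) = -∫ s in (0:ℝ)..1, f s := by
    simp only [h2]
    rw [intervalIntegral.integral_neg]
  rw [h3] at h1
  linarith

lemma hannG_eq (x : ℝ) : Complex.exp (Real.pi * x * Complex.I) * hannG x = ((hannH x : ℝ) : ℂ) := by
  have hcont1 : Continuous fun s : ℝ => Real.cos (2 * π * x * (s - 1/2)) * Real.sin (π * s) ^ 2 := by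
    continuity
  have hcont2 : Continuous fun s : ℝ => Real.sin (2 * π * x * (s - 1/2)) * Real.sin (π * s) ^ 2 := by
    continuity
  have step1 : Complex.exp (Real.pi * x * Complex.I) * hannG x
      = ∫ s in (0:ℝ)..1, (((Real.cos (2 * π * x * (s - 1/2)) * Real.sin (π * s) ^ 2 : ℝ) : ℂ)
          - ((Real.sin (2 * π * x * (s - 1/2)) * Real.sin (π * s) ^ 2 : ℝ) : ℂ) * Complex.I) := by
    rw [hannG, ← intervalIntegral.integral_const_mul]
    apply intervalIntegral.integral_congr
    intro s _
    dsimp only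
    have e0 : Complex.exp (Real.pi * x * Complex.I) * Complex.exp (-2 * Real.pi * Complex.I * x * s)
        = Complex.exp (((-(2 * π * x * (s - 1/2)) : ℝ) : ℂ) * Complex.I) := by
      rw [← Complex.exp_add]
      congr 1
      push_cast
      ring
    rw [← mul_assoc, e0, Complex.exp_mul_I]
    rw [← Complex.ofReal_cos, ← Complex.ofReal_sin]
    rw [Real.cos_neg, Real.sin_neg]
    push_cast
    ring
  rw [step1, intervalIntegral.integral_sub, intervalIntegral.integral_mul_const,
    intervalIntegral.integral_ofReal, intervalIntegral.integral_ofReal, hannK_zero, hannH]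
  · push_cast
    ring
  · exact (Complex.continuous_ofReal.comp hcont1).intervalIntegrable 0 1
  · exact ((Complex.continuous_ofReal.comp hcont2).mul continuous_const).intervalIntegrable 0 1

lemma hannFT_eq (T : ℝ) (hT : 0 < T) (ν : ℝ) : hannFT T ν = (T : ℂ) * hannG (T * ν) := by
  have hT' : T ≠ 0 := ne_of_gt hT
  have h := intervalIntegral.integral_comp_mul_right
    (fun t : ℝ => Complex.exp (-2 * Real.pi * Complex.I * ν * t) * ((Real.sin (Real.pi * t / T) : ℂ)) ^ 2) hT' (a := 0) (b := 1)
  rw [zero_mul, one_mul] at h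
  have h2 : (∫ s in (0:ℝ)..1, Complex.exp (-2 * Real.pi * Complex.I * ν * ((s * T : ℝ) : ℂ)) * ((Real.sin (Real.pi * (s * T) / T) : ℂ)) ^ 2)
      = ∫ s in (0:ℝ)..1, Complex.exp (-2 * Real.pi * Complex.I * ((T * ν : ℝ) : ℂ) * s) * ((Real.sin (Real.pi * s) : ℂ)) ^ 2 := by
    apply intervalIntegral.integral_congr
    intro s _
    dsimp only
    have e2 : Real.pi * (s * T) / T = Real.pi * s := by field_simp
    rw [e2]
    congr 2
    push_cast
    ring
  rw [h2] at h
  rw [hannFT, hannG, h, Complex.real_smul, ← mul_assoc, ← Complex.ofReal_mul,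
    mul_inv_cancel₀ hT', Complex.ofReal_one, one_mul]

lemma abs_hannFT (T : ℝ) (hT : 0 < T) (ν : ℝ) :
    ‖hannFT T ν‖ = T * |hannH (T * ν)| := by
  rw [hannFT_eq T hT ν, norm_mul, Complex.norm_real, Real.norm_eq_abs, abs_of_pos hT]
  congr 1
  have h := hannG_eq (T * ν)
  have h2 : ‖Complex.exp (Real.pi * ((T * ν : ℝ) : ℂ) * Complex.I) * hannG (T * ν)‖
      = ‖hannG (T * ν)‖ := by
    rw [norm_mul, show ((Real.pi : ℂ) * ((T * ν : ℝ) : ℂ) * Complex.I)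
      = ((π * (T * ν) : ℝ) : ℂ) * Complex.I by push_cast; ring,
      Complex.norm_exp_ofReal_mul_I, one_mul]
  rw [← h2, h, Complex.norm_real, Real.norm_eq_abs]

lemma hannH_lower (x : ℝ) : 1/2 - (π ^ 2 / 12 - 1/2) * x ^ 2 ≤ hannH x := by
  rw [hannH]
  have hπ := Real.pi_ne_zero
  have hmono : (∫ s in (0:ℝ)..1, (Real.sin (π * s) ^ 2
        - (2 * π ^ 2 * x ^ 2) * ((s - 1/2) ^ 2 * Real.sin (π * s) ^ 2)))
      ≤ ∫ s in (0:ℝ)..1, Real.cos (2 * π * x * (s - 1/2)) * Real.sin (π * s) ^ 2 := by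
    apply intervalIntegral.integral_mono_on (by norm_num)
    · exact ((by fun_prop : Continuous fun s : ℝ => Real.sin (π * s) ^ 2
        - (2 * π ^ 2 * x ^ 2) * ((s - 1/2) ^ 2 * Real.sin (π * s) ^ 2)).intervalIntegrable 0 1)
    · exact ((by fun_prop : Continuous fun s : ℝ =>
        Real.cos (2 * π * x * (s - 1/2)) * Real.sin (π * s) ^ 2).intervalIntegrable 0 1)
    · intro s _
      have hb := Real.one_sub_sq_div_two_le_cos (x := 2 * π * x * (s - 1/2))
      nlinarith [sq_nonneg (Real.sin (π * s)), mul_le_mul_of_nonneg_right hb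
        (sq_nonneg (Real.sin (π * s)))]
  have heval : (∫ s in (0:ℝ)..1, (Real.sin (π * s) ^ 2
        - (2 * π ^ 2 * x ^ 2) * ((s - 1/2) ^ 2 * Real.sin (π * s) ^ 2)))
      = 1/2 - (2 * π ^ 2 * x ^ 2) * (1/24 - 1/(4 * π ^ 2)) := by
    rw [intervalIntegral.integral_sub
      ((by fun_prop : Continuous fun s : ℝ => Real.sin (π * s) ^ 2).intervalIntegrable 0 1)
      (((by fun_prop : Continuous fun s : ℝ =>
          (s - 1/2) ^ 2 * Real.sin (π * s) ^ 2).intervalIntegrable 0 1).const_mul _),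
      intervalIntegral.integral_const_mul, my_I0, my_I2]
  rw [heval] at hmono
  have e : (2 * π ^ 2 * x ^ 2) * (1/24 - 1/(4 * π ^ 2)) = (π ^ 2 / 12 - 1/2) * x ^ 2 := by
    field_simp
    ring
  rw [e] at hmono
  linarith

lemma hannH_upper (x : ℝ) (hx : x ^ 2 ≤ 4/3) :
    hannH x ≤ 1/2 - (π ^ 2 / 12 - 1/2) * x ^ 2 + (π ^ 4 / 240 - π ^ 2 / 12 + 1/2) * x ^ 4 := by
  rw [hannH]
  have hπ := Real.pi_ne_zero
  have hπlt : π < 3.15 := Real.pi_lt_d2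
  have hπgt : π > 3.141592 := Real.pi_gt_d6
  have hmono : (∫ s in (0:ℝ)..1, Real.cos (2 * π * x * (s - 1/2)) * Real.sin (π * s) ^ 2)
      ≤ ∫ s in (0:ℝ)..1, (Real.sin (π * s) ^ 2
        - (2 * π ^ 2 * x ^ 2) * ((s - 1/2) ^ 2 * Real.sin (π * s) ^ 2)
        + (2 * π ^ 4 / 3 * x ^ 4) * ((s - 1/2) ^ 4 * Real.sin (π * s) ^ 2)) := by
    apply intervalIntegral.integral_mono_on (by norm_num)
    · exact ((by fun_prop : Continuous fun s : ℝ =>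
        Real.cos (2 * π * x * (s - 1/2)) * Real.sin (π * s) ^ 2).intervalIntegrable 0 1)
    · exact ((by fun_prop : Continuous fun s : ℝ => Real.sin (π * s) ^ 2
        - (2 * π ^ 2 * x ^ 2) * ((s - 1/2) ^ 2 * Real.sin (π * s) ^ 2)
        + (2 * π ^ 4 / 3 * x ^ 4) * ((s - 1/2) ^ 4 * Real.sin (π * s) ^ 2)).intervalIntegrable 0 1)
    · intro s hs
      obtain ⟨hs0, hs1⟩ := hs
      have hhalf : (s - 1/2) ^ 2 ≤ 1/4 := by nlinarith
      have hp2 : π ^ 2 < 9.9225 := by nlinarith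
      have hprod : x ^ 2 * (s - 1/2) ^ 2 ≤ 4/3 * (1/4) :=
        mul_le_mul hx hhalf (sq_nonneg _) (by norm_num)
      have hu2 : (2 * π * x * (s - 1/2)) ^ 2 ≤ 24 := by
        have he : (2 * π * x * (s - 1/2)) ^ 2 = 4 * π ^ 2 * (x ^ 2 * (s - 1/2) ^ 2) := by ring
        rw [he]
        nlinarith [mul_nonneg (sq_nonneg x) (sq_nonneg (s - 1/2)), sq_nonneg π, hp2, hprod]
      have hb := my_cos_le_quartic hu2
      nlinarith [mul_le_mul_of_nonneg_right hb (sq_nonneg (Real.sin (π * s)))]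
  have heval : (∫ s in (0:ℝ)..1, (Real.sin (π * s) ^ 2
        - (2 * π ^ 2 * x ^ 2) * ((s - 1/2) ^ 2 * Real.sin (π * s) ^ 2)
        + (2 * π ^ 4 / 3 * x ^ 4) * ((s - 1/2) ^ 4 * Real.sin (π * s) ^ 2)))
      = 1/2 - (2 * π ^ 2 * x ^ 2) * (1/24 - 1/(4 * π ^ 2))
        + (2 * π ^ 4 / 3 * x ^ 4) * (1/160 - 1/(8 * π ^ 2) + 3/(4 * π ^ 4)) := by
    rw [intervalIntegral.integral_add
      ((((by fun_prop : Continuous fun s : ℝ => Real.sin (π * s) ^ 2).intervalIntegrable 0 1)).sub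
        (((by fun_prop : Continuous fun s : ℝ =>
          (s - 1/2) ^ 2 * Real.sin (π * s) ^ 2).intervalIntegrable 0 1).const_mul _))
      (((by fun_prop : Continuous fun s : ℝ =>
          (s - 1/2) ^ 4 * Real.sin (π * s) ^ 2).intervalIntegrable 0 1).const_mul _),
      intervalIntegral.integral_sub
      ((by fun_prop : Continuous fun s : ℝ => Real.sin (π * s) ^ 2).intervalIntegrable 0 1)
      (((by fun_prop : Continuous fun s : ℝ =>
          (s - 1/2) ^ 2 * Real.sin (π * s) ^ 2).intervalIntegrable 0 1).const_mul _),
      intervalIntegral.integral_const_mul, intervalIntegral.integral_const_mul,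
      my_I0, my_I2, my_I4]
  rw [heval] at hmono
  have e : 1/2 - (2 * π ^ 2 * x ^ 2) * (1/24 - 1/(4 * π ^ 2))
        + (2 * π ^ 4 / 3 * x ^ 4) * (1/160 - 1/(8 * π ^ 2) + 3/(4 * π ^ 4))
      = 1/2 - (π ^ 2 / 12 - 1/2) * x ^ 2 + (π ^ 4 / 240 - π ^ 2 / 12 + 1/2) * x ^ 4 := by
    field_simp
    ring
  rw [e] at hmono
  linarith

/-- Quadratic bounds on the modulus of the Hann window spectrum near the origin:
`(1/2)(1 - (3/2)(Tν)²) ≤ |w̃(ν)|/T ≤ (1/2)(1 - (1/4)(Tν)²)` for `|Tν| ≤ 2/√3`. -/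
theorem hannFT_quad_bounds (T : ℝ) (hT : 0 < T) (ν : ℝ) (hν : |T * ν| ≤ 2 / Real.sqrt 3) :
    (1 / 2) * (1 - (3 / 2) * (T * ν) ^ 2) ≤ ‖hannFT T ν‖ / T ∧
    ‖hannFT T ν‖ / T ≤ (1 / 2) * (1 - (1 / 4) * (T * ν) ^ 2) := by
  set x := T * ν with hxdef
  have hx2 : x ^ 2 ≤ 4/3 := by
    have hsq : |x| ^ 2 ≤ (2 / Real.sqrt 3) ^ 2 :=
      pow_le_pow_left₀ (abs_nonneg x) hν 2
    rw [_root_.sq_abs, div_pow, Real.sq_sqrt (by norm_num : (0:ℝ) ≤ 3)] at hsq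
    linarith
  have habs : ‖hannFT T ν‖ / T = |hannH x| := by
    rw [abs_hannFT T hT ν, ← hxdef, mul_div_cancel_left₀ _ (ne_of_gt hT)]
  have hπlt : π < 3.15 := Real.pi_lt_d2
  have hπgt : π > 3.141592 := Real.pi_gt_d6
  have q1 : π ^ 2 > 9.8696 := by nlinarith
  have q2 : π ^ 2 < 9.9225 := by nlinarith
  have q3 : π ^ 4 < 98.46 := by nlinarith
  have q4 : π ^ 4 > 97.40 := by nlinarith
  have hlow := hannH_lower x
  have hup := hannH_upper x hx2
  have hpos : 0 ≤ hannH x := by nlinarith [sq_nonneg x]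
  rw [habs, _root_.abs_of_nonneg hpos]
  constructor
  · nlinarith [sq_nonneg x]
  · have hc4 : (0:ℝ) ≤ π ^ 4 / 240 - π ^ 2 / 12 + 1/2 := by nlinarith
    have hkey : (0:ℝ) ≤ (π ^ 2 / 12 - 1/2) - 1/8 - (π ^ 4 / 240 - π ^ 2 / 12 + 1/2) * x ^ 2 := by
      nlinarith [mul_nonneg hc4 (sub_nonneg.mpr hx2)]
    nlinarith [mul_nonneg (sq_nonneg x) hkey]
end

section
/- The series Σ_{m=1}^∞ 1/((m - 1/4)(m - 1/2)(m - 3/4)) converges and equals 16·log 2. -/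
open Filter Topology

/-- The `k`-th pair of the alternating harmonic series. -/
noncomputable def hseq (k : ℕ) : ℝ := 1 / (2 * (k : ℝ) + 1) - 1 / (2 * (k : ℝ) + 2)

lemma summable_hseq : Summable hseq := by
  have hcmp : Summable (fun k : ℕ => 1 / ((k : ℝ) + 1) ^ 2) := by
    have := (summable_nat_add_iff 1).2 (Real.summable_one_div_nat_pow.2 (by norm_num : 1 < 2))
    simpa [add_comm] using this
  refine Summable.of_nonneg_of_le (fun k => ?_) (fun k => ?_) hcmp
  · have h1 : (0:ℝ) < 2 * (k : ℝ) + 1 := by positivity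
    have h2 : (0:ℝ) < 2 * (k : ℝ) + 2 := by positivity
    rw [hseq, sub_nonneg]
    exact one_div_le_one_div_of_le h1 (by linarith)
  · have h1 : (0:ℝ) < 2 * (k : ℝ) + 1 := by positivity
    have h2 : (0:ℝ) < 2 * (k : ℝ) + 2 := by positivity
    have h3 : (0:ℝ) < (k : ℝ) + 1 := by positivity
    have : hseq k = 1 / ((2 * (k : ℝ) + 1) * (2 * (k : ℝ) + 2)) := by
      rw [hseq]; field_simp; ring
    rw [this]
    apply one_div_le_one_div_of_le (by positivity)
    nlinarith [sq_nonneg ((k:ℝ))]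

lemma sum_range_hseq (n : ℕ) :
    ∑ k ∈ Finset.range n, hseq k = (harmonic (2 * n) : ℝ) - (harmonic n : ℝ) := by
  induction n with
  | zero => simp
  | succ n ih =>
    have h2 : 2 * (n + 1) = (2 * n + 1) + 1 := by ring
    rw [Finset.sum_range_succ, ih, h2, harmonic_succ, harmonic_succ, harmonic_succ, hseq]
    push_cast
    have h1 : (0:ℝ) < 2 * (n : ℝ) + 1 := by positivity
    have h2 : (0:ℝ) < 2 * (n : ℝ) + 2 := by positivity
    have h3 : (0:ℝ) < (n : ℝ) + 1 := by positivity
    field_simp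
    ring

lemma hasSum_hseq : HasSum hseq (Real.log 2) := by
  have hs := summable_hseq
  have h1 : Filter.Tendsto (fun n : ℕ => ∑ k ∈ Finset.range n, hseq k) atTop
      (𝓝 (∑' k, hseq k)) := hs.hasSum.tendsto_sum_nat
  have h2 : Filter.Tendsto (fun n : ℕ => ∑ k ∈ Finset.range n, hseq k) atTop
      (𝓝 (Real.log 2)) := by
    have hA : Filter.Tendsto (fun n : ℕ => (harmonic (2 * n) : ℝ) - Real.log (2 * n : ℕ))
        atTop (𝓝 Real.eulerMascheroniConstant) :=
      Real.tendsto_harmonic_sub_log.comp (tendsto_id.const_mul_atTop' two_pos)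
    have hB : Filter.Tendsto (fun n : ℕ => (harmonic n : ℝ) - Real.log n) atTop
        (𝓝 Real.eulerMascheroniConstant) := Real.tendsto_harmonic_sub_log
    have key := (hA.sub hB).add_const (Real.log 2)
    have : Filter.Tendsto (fun n : ℕ =>
        ((harmonic (2*n) : ℝ) - Real.log (2*n : ℕ) - ((harmonic n : ℝ) - Real.log n))
          + Real.log 2) atTop (𝓝 (Real.log 2)) := by
      simpa using key
    apply this.congr'
    filter_upwards [eventually_gt_atTop 0] with n hn
    have hn' : (0:ℝ) < (n : ℝ) := by exact_mod_cast hn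
    rw [sum_range_hseq]
    push_cast
    rw [Real.log_mul (by norm_num) hn'.ne']
    ring
  exact (tendsto_nhds_unique h1 h2) ▸ hs.hasSum

/-- `Σ_{m=1}^∞ 1/((m - 1/4)(m - 1/2)(m - 3/4)) = 16 log 2`, the sum being convergent. -/
theorem tsum_leakage_series :
    Summable (fun m : ℕ =>
      1 / (((m : ℝ) + 3 / 4) * ((m : ℝ) + 1 / 2) * ((m : ℝ) + 1 / 4))) ∧
    ∑' m : ℕ, 1 / (((m : ℝ) + 3 / 4) * ((m : ℝ) + 1 / 2) * ((m : ℝ) + 1 / 4)) =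
      16 * Real.log 2 := by
  have hs := summable_hseq
  have hinj2 : Function.Injective (fun k : ℕ => 2 * k) := fun a b h => by dsimp at h; omega
  have hinj2' : Function.Injective (fun k : ℕ => 2 * k + 1) := fun a b h => by dsimp at h; omega
  have he : Summable (fun k : ℕ => hseq (2 * k)) := hs.comp_injective hinj2
  have ho : Summable (fun k : ℕ => hseq (2 * k + 1)) := hs.comp_injective hinj2'
  have hfe : ∀ m : ℕ,
      1 / (((m : ℝ) + 3 / 4) * ((m : ℝ) + 1 / 2) * ((m : ℝ) + 1 / 4)) =
        32 * (hseq (2 * m) + hseq (2 * m + 1)) - 16 * hseq m := by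
    intro m
    simp only [hseq]
    push_cast
    have h1 : (0:ℝ) < (m : ℝ) + 3 / 4 := by positivity
    have h2 : (0:ℝ) < (m : ℝ) + 1 / 2 := by positivity
    have h3 : (0:ℝ) < (m : ℝ) + 1 / 4 := by positivity
    have h4 : (0:ℝ) < (m : ℝ) + 1 := by positivity
    have h5 : (0:ℝ) < 4 * (m : ℝ) + 1 := by positivity
    have h6 : (0:ℝ) < 4 * (m : ℝ) + 2 := by positivity
    have h7 : (0:ℝ) < 4 * (m : ℝ) + 3 := by positivity
    have h8 : (0:ℝ) < 4 * (m : ℝ) + 4 := by positivity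
    have h9 : (0:ℝ) < 2 * (m : ℝ) + 1 := by positivity
    have h10 : (0:ℝ) < 2 * (m : ℝ) + 2 := by positivity
    field_simp
    ring
  have hsum2 : Summable (fun m : ℕ =>
      32 * (hseq (2 * m) + hseq (2 * m + 1)) - 16 * hseq m) :=
    ((he.add ho).mul_left 32).sub (hs.mul_left 16)
  have hS : Summable (fun m : ℕ =>
      1 / (((m : ℝ) + 3 / 4) * ((m : ℝ) + 1 / 2) * ((m : ℝ) + 1 / 4))) := by
    exact hsum2.congr fun m => (hfe m).symm
  refine ⟨hS, ?_⟩
  have htsum_eo : (∑' k, hseq (2 * k)) + ∑' k, hseq (2 * k + 1) = Real.log 2 :=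
    (tsum_even_add_odd he ho).trans hasSum_hseq.tsum_eq
  calc ∑' m : ℕ, 1 / (((m : ℝ) + 3 / 4) * ((m : ℝ) + 1 / 2) * ((m : ℝ) + 1 / 4))
      = ∑' m : ℕ, (32 * (hseq (2 * m) + hseq (2 * m + 1)) - 16 * hseq m) :=
        tsum_congr hfe
    _ = 32 * ((∑' k, hseq (2 * k)) + ∑' k, hseq (2 * k + 1)) - 16 * ∑' k, hseq k := by
        rw [Summable.tsum_sub ((he.add ho).mul_left 32) (hs.mul_left 16), tsum_mul_left,
          tsum_mul_left, Summable.tsum_add he ho]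
    _ = 32 * Real.log 2 - 16 * Real.log 2 := by
        rw [htsum_eo, hasSum_hseq.tsum_eq]
    _ = 16 * Real.log 2 := by ring
end

section
/- Consider the windowed point-process spectrum H(ν) = (1/T)(Σ_{k=0}^p c_k w̃(ν - ν_k) + ε̃(ν)), where |w̃(ν)| ≤ φ(|ν|) for a nonincreasing envelope φ, and the signal frequencies satisfy min_{k≠k'}|ν_k - ν_{k'}| ≥ 4/T. If ν is at distance at least 2/T from every ν_k, then |H(ν)| ≤ ‖c‖_∞ · (2/T)·Σ_{l=0}^∞ φ(2/T + 4l/T) + sup_ν |ε̃(ν)|/T. -/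
open Finset

/-- Leakage noise floor bound: away from all signal frequencies (distance ≥ 2/T), the
windowed spectrum `H(ν) = (1/T)(Σ_k c_k w̃(ν-ν_k) + ε̃(ν))` satisfies
`|H(ν)| ≤ ‖c‖_∞ (2/T) Σ_{l≥0} φ(2/T + 4l/T) + sup_ν |ε̃(ν)|/T`. -/
theorem leakage_noise_floor (T : ℝ) (hT : 0 < T) (p : ℕ)
    (c : Fin (p + 1) → ℂ) (wt : ℝ → ℂ) (φ : ℝ → ℝ)
    (hφ_anti : AntitoneOn φ (Set.Ici 0)) (hφ_nonneg : ∀ x, 0 ≤ φ x)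
    (henv : ∀ ν : ℝ, ‖wt ν‖ ≤ φ |ν|)
    (hsum : Summable fun l : ℕ => φ (2 / T + 4 * (l : ℝ) / T))
    (νf : Fin (p + 1) → ℝ)
    (hsep : ∀ k k' : Fin (p + 1), k ≠ k' → 4 / T ≤ |νf k - νf k'|)
    (ε : ℝ → ℂ)
    (hε_bdd : BddAbove (Set.range fun ν : ℝ => ‖ε ν‖ / T))
    (ν : ℝ) (hν : ∀ k : Fin (p + 1), 2 / T ≤ |ν - νf k|) :
    ‖(1 / T) * (∑ k, c k * wt (ν - νf k) + ε ν)‖ ≤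
      (Finset.univ.sup' Finset.univ_nonempty fun k => ‖c k‖) *
          ((2 / T) * ∑' l : ℕ, φ (2 / T + 4 * (l : ℝ) / T)) +
        ⨆ ν' : ℝ, ‖ε ν'‖ / T := by
  set C := (Finset.univ.sup' Finset.univ_nonempty fun k => ‖c k‖) with hC
  have hCk : ∀ k, ‖c k‖ ≤ C := by
    intro k
    rw [hC]
    exact Finset.le_sup' (fun k => ‖c k‖) (Finset.mem_univ k)
  have hC0 : 0 ≤ C := le_trans (norm_nonneg (c 0)) (hCk 0)
  set d : Fin (p+1) → ℝ := fun k => |ν - νf k| with hd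
  have hd2 : ∀ k, 2/T ≤ d k := hν
  have hd0 : ∀ k, 0 ≤ d k := fun k => abs_nonneg _
  set L : Fin (p+1) → ℕ := fun k => ⌊(d k * T - 2)/4⌋₊ with hL
  have hargnn : ∀ k, 0 ≤ (d k * T - 2)/4 := by
    intro k
    have h1 : 2/T * T ≤ d k * T := mul_le_mul_of_nonneg_right (hd2 k) hT.le
    have h2 : 2/T * T = 2 := by field_simp
    linarith
  have hLle : ∀ k, 2/T + 4 * (L k : ℝ)/T ≤ d k := by
    intro k
    have h1 : (L k : ℝ) ≤ (d k * T - 2)/4 := Nat.floor_le (hargnn k)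
    rw [← add_div, div_le_iff₀ hT]
    linarith
  have harg0 : ∀ l : ℕ, (0:ℝ) ≤ 2/T + 4 * (l : ℝ)/T := by
    intro l
    have : (0:ℝ) ≤ 2/T := by positivity
    have : (0:ℝ) ≤ 4 * (l:ℝ)/T := by positivity
    linarith
  set F : Fin (p+1) → ℕ × Bool := fun k => (L k, decide (ν < νf k)) with hF
  have hFinj : ∀ k ∈ (Finset.univ : Finset (Fin (p+1))), ∀ k' ∈ Finset.univ,
      F k = F k' → k = k' := by
    intro k _ k' _ h
    by_contra hne
    have hsep' := hsep k k' hne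
    have hLeq : L k = L k' := congrArg Prod.fst h
    have hside : decide (ν < νf k) = decide (ν < νf k') := congrArg Prod.snd h
    rw [decide_eq_decide] at hside
    have hx : ((L k : ℝ)) ≤ (d k * T - 2)/4 := Nat.floor_le (hargnn k)
    have hx' : ((L k' : ℝ)) ≤ (d k' * T - 2)/4 := Nat.floor_le (hargnn k')
    have hy : (d k * T - 2)/4 < (L k : ℝ) + 1 := Nat.lt_floor_add_one _
    have hy' : (d k' * T - 2)/4 < (L k' : ℝ) + 1 := Nat.lt_floor_add_one _
    have hLcast : ((L k : ℝ)) = (L k' : ℝ) := by exact_mod_cast congrArg Nat.cast hLeq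
    have hdd : |d k - d k'| * T < 4 := by
      have h1 : d k * T - d k' * T < 4 := by linarith
      have h2 : d k' * T - d k * T < 4 := by linarith
      have e : |d k - d k'| * T = |d k * T - d k' * T| := by
        rw [show d k * T - d k' * T = (d k - d k') * T by ring, abs_mul, abs_of_pos hT]
      rw [e, abs_sub_lt_iff]
      exact ⟨h1, h2⟩
    have hsepT : 4 ≤ |νf k - νf k'| * T := by
      have := mul_le_mul_of_nonneg_right hsep' hT.le
      have h4 : 4/T * T = 4 := by field_simp
      linarith
    rcases lt_or_ge ν (νf k) with h1 | h1
    · have h2 : ν < νf k' := hside.mp h1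
      have e1 : d k = νf k - ν := by simp only [hd]; rw [abs_of_nonpos (by linarith)]; ring
      have e2 : d k' = νf k' - ν := by simp only [hd]; rw [abs_of_nonpos (by linarith)]; ring
      have : |νf k - νf k'| = |d k - d k'| := by rw [e1, e2]; congr 1; ring
      rw [this] at hsepT
      nlinarith
    · have h2 : νf k' ≤ ν := by
        by_contra hcon
        exact absurd (hside.mpr (lt_of_not_ge hcon)) (not_lt.mpr h1)
      have e1 : d k = ν - νf k := by simp only [hd]; rw [abs_of_nonneg (by linarith)]
      have e2 : d k' = ν - νf k' := by simp only [hd]; rw [abs_of_nonneg (by linarith)]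
      have : |νf k - νf k'| = |d k - d k'| := by
        rw [e1, e2, ← abs_neg]; congr 1; ring
      rw [this] at hsepT
      nlinarith
  -- key combinatorial bound
  have key : ∑ k, φ (d k) ≤ 2 * ∑' l : ℕ, φ (2/T + 4*(l:ℝ)/T) := by
    have step1 : ∑ k, φ (d k) ≤
        ∑ k, (fun q : ℕ × Bool => φ (2/T + 4*(q.1:ℝ)/T)) (F k) := by
      apply Finset.sum_le_sum
      intro k _
      exact hφ_anti (Set.mem_Ici.mpr (harg0 (L k))) (Set.mem_Ici.mpr (hd0 k)) (hLle k)
    have step2 : ∑ k, (fun q : ℕ × Bool => φ (2/T + 4*(q.1:ℝ)/T)) (F k)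
        = ∑ q ∈ Finset.univ.image F, φ (2/T + 4*(q.1:ℝ)/T) := by
      rw [Finset.sum_image hFinj]
    set S := Finset.univ.image F with hS
    set N := S.image Prod.fst with hN
    have hsub : S ⊆ N ×ˢ (Finset.univ : Finset Bool) := by
      intro q hq
      rw [Finset.mem_product]
      exact ⟨Finset.mem_image_of_mem _ hq, Finset.mem_univ _⟩
    have step3 : ∑ q ∈ S, φ (2/T + 4*(q.1:ℝ)/T)
        ≤ ∑ q ∈ N ×ˢ (Finset.univ : Finset Bool), φ (2/T + 4*(q.1:ℝ)/T) :=
      Finset.sum_le_sum_of_subset_of_nonneg hsub (fun q _ _ => hφ_nonneg _)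
    have step4 : ∑ q ∈ N ×ˢ (Finset.univ : Finset Bool), φ (2/T + 4*(q.1:ℝ)/T)
        = 2 * ∑ n ∈ N, φ (2/T + 4*(n:ℝ)/T) := by
      rw [Finset.sum_product, Finset.mul_sum]
      refine Finset.sum_congr rfl fun n _ => ?_
      simp [two_mul]
    have step5 : ∑ n ∈ N, φ (2/T + 4*(n:ℝ)/T) ≤ ∑' l : ℕ, φ (2/T + 4*(l:ℝ)/T) :=
      Summable.sum_le_tsum N (fun l _ => hφ_nonneg _) hsum
    calc ∑ k, φ (d k) ≤ _ := step1
      _ = _ := step2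
      _ ≤ _ := step3
      _ = 2 * ∑ n ∈ N, φ (2/T + 4*(n:ℝ)/T) := step4
      _ ≤ 2 * ∑' l : ℕ, φ (2/T + 4*(l:ℝ)/T) := by linarith [step5]
  -- pointwise bounds
  have habs : ‖∑ k, c k * wt (ν - νf k) + ε ν‖
      ≤ C * ∑ k, φ (d k) + ‖ε ν‖ := by
    refine le_trans (norm_add_le _ _) (add_le_add ?_ le_rfl)
    calc ‖∑ k, c k * wt (ν - νf k)‖
        ≤ ∑ k, ‖c k * wt (ν - νf k)‖ := norm_sum_le _ _
      _ ≤ ∑ k, C * φ (d k) := by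
          apply Finset.sum_le_sum
          intro k _
          rw [norm_mul]
          exact mul_le_mul (hCk k) (henv (ν - νf k)) (norm_nonneg _) hC0
      _ = C * ∑ k, φ (d k) := by rw [Finset.mul_sum]
  have hεsup : ‖ε ν‖ / T ≤ ⨆ ν' : ℝ, ‖ε ν'‖ / T :=
    le_ciSup hε_bdd ν
  have htsum0 : 0 ≤ ∑' l : ℕ, φ (2/T + 4*(l:ℝ)/T) :=
    tsum_nonneg (fun l => hφ_nonneg _)
  have hsum0 : 0 ≤ ∑ k, φ (d k) := Finset.sum_nonneg (fun k _ => hφ_nonneg _)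
  calc ‖(1 / T) * (∑ k, c k * wt (ν - νf k) + ε ν)‖
      = (1/T) * ‖∑ k, c k * wt (ν - νf k) + ε ν‖ := by
        rw [norm_mul, norm_div, norm_one, Complex.norm_real, Real.norm_eq_abs, abs_of_pos hT]
    _ ≤ (1/T) * (C * ∑ k, φ (d k) + ‖ε ν‖) := by
        exact mul_le_mul_of_nonneg_left habs (by positivity)
    _ = C * ((1/T) * ∑ k, φ (d k)) + ‖ε ν‖ / T := by ring
    _ ≤ C * ((2/T) * ∑' l : ℕ, φ (2/T + 4*(l:ℝ)/T)) + ⨆ ν' : ℝ, ‖ε ν'‖ / T := by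
        refine add_le_add ?_ hεsup
        refine mul_le_mul_of_nonneg_left ?_ hC0
        rw [div_mul_eq_mul_div, div_mul_eq_mul_div, div_le_div_iff₀ hT hT]
        nlinarith [key]
end

section
/- Under the setup H(ν) = (1/T)Σ_{k=0}^p c_k w̃(ν - ν_k) + ε̃(ν)/T with min_{k≠k'}|ν_k - ν_{k'}| ≥ 4/T, define S_2 = (2/T)Σ_{l=1}^∞ sup_{|ν| ≥ 4l/T} |w̃(ν)|. If j maximizes |c_j|, then (|w̃(0)|/T)·‖c‖_∞ ≤ |H(ν_j)| + S_2·‖c‖_∞ + sup_ν |ε̃(ν)|/T, and hence (|w̃(0)|/T - S_2)·‖c‖_∞ - sup_ν |ε̃(ν)|/T ≤ sup_ν |H(ν)|. -/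
open Finset

lemma sep_count (δ : ℝ) (s : Finset ℝ)
    (hlb : ∀ x ∈ s, δ ≤ x)
    (hsep : ∀ x ∈ s, ∀ y ∈ s, x ≠ y → δ ≤ |x - y|) :
    ∀ x ∈ s, δ * (((s.filter (fun y => y < x)).card : ℝ) + 1) ≤ x := by
  suffices H : ∀ n : ℕ, ∀ x ∈ s, (s.filter (fun y => y < x)).card = n →
      δ * ((n : ℝ) + 1) ≤ x by
    intro x hx
    exact H _ x hx rfl
  intro n
  induction n with
  | zero =>
    intro x hx _
    simpa using hlb x hx
  | succ n ih =>
    intro x hx h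
    have hne : (s.filter (fun y => y < x)).Nonempty := by
      rw [← Finset.card_pos, h]; omega
    set m := (s.filter (fun y => y < x)).max' hne with hmdef
    have hm := Finset.max'_mem _ hne
    obtain ⟨hms, hmx⟩ := Finset.mem_filter.mp hm
    have key : s.filter (fun y => y < x) = insert m (s.filter (fun y => y < m)) := by
      ext y
      simp only [Finset.mem_insert, Finset.mem_filter]
      constructor
      · rintro ⟨hys, hyx⟩
        have hle : y ≤ m :=
          Finset.le_max' (s.filter (fun z => z < x)) y (Finset.mem_filter.mpr ⟨hys, hyx⟩)
        rcases eq_or_lt_of_le hle with h' | h'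
        · exact Or.inl h'
        · exact Or.inr ⟨hys, h'⟩
      · rintro (rfl | ⟨hys, hym⟩)
        · exact ⟨hms, hmx⟩
        · exact ⟨hys, hym.trans hmx⟩
    have hcard : (s.filter (fun y => y < m)).card = n := by
      have hnm : m ∉ s.filter (fun y => y < m) := by simp
      rw [key, Finset.card_insert_of_notMem hnm] at h
      omega
    have h1 := ih m hms hcard
    have h2 : δ ≤ x - m := by
      have := hsep x hx m hms (ne_of_gt hmx)
      rwa [abs_of_pos (by linarith)] at this
    push_cast
    linarith

/-- Lower bound on the peak of the windowed spectrum: with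
`H(ν) = (1/T) Σ_k c_k w̃(ν-ν_k) + ε̃(ν)/T`, frequencies pairwise `4/T`-separated,
`S₂ = (2/T) Σ_{l≥1} sup_{|ν| ≥ 4l/T} |w̃(ν)|`, and `j` maximizing `|c_j|`:
`(|w̃(0)|/T)‖c‖_∞ ≤ |H(ν_j)| + S₂‖c‖_∞ + sup_ν |ε̃(ν)|/T`, hence
`(|w̃(0)|/T - S₂)‖c‖_∞ - sup_ν |ε̃(ν)|/T ≤ sup_ν |H(ν)|`. -/
theorem spectrum_peak_lower_bound (T : ℝ) (hT : 0 < T) (p : ℕ)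
    (c : Fin (p + 1) → ℂ) (wt : ℝ → ℂ) (ε : ℝ → ℂ) (H : ℝ → ℂ)
    (νf : Fin (p + 1) → ℝ)
    (hH : ∀ ν : ℝ, H ν = (1 / T) * ∑ k, c k * wt (ν - νf k) + ε ν / T)
    (hsep : ∀ k k' : Fin (p + 1), k ≠ k' → 4 / T ≤ |νf k - νf k'|)
    (hwt_bdd : ∀ l : ℕ, BddAbove
      ((fun ν : ℝ => ‖wt ν‖) '' {ν : ℝ | 4 * ((l : ℝ) + 1) / T ≤ |ν|}))
    (hwt_sum : Summable fun l : ℕ =>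
      sSup ((fun ν : ℝ => ‖wt ν‖) '' {ν : ℝ | 4 * ((l : ℝ) + 1) / T ≤ |ν|}))
    (hε_bdd : BddAbove (Set.range fun ν : ℝ => ‖ε ν‖ / T))
    (hH_bdd : BddAbove (Set.range fun ν : ℝ => ‖H ν‖))
    (j : Fin (p + 1)) (hj : ∀ k, ‖c k‖ ≤ ‖c j‖) :
    (‖wt 0‖ / T) * ‖c j‖ ≤
        ‖H (νf j)‖ +
          ((2 / T) * ∑' l : ℕ,
              sSup ((fun ν : ℝ => ‖wt ν‖) '' {ν : ℝ | 4 * ((l : ℝ) + 1) / T ≤ |ν|})) *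
            ‖c j‖ +
          (⨆ ν : ℝ, ‖ε ν‖ / T) ∧
    (‖wt 0‖ / T -
          (2 / T) * ∑' l : ℕ,
            sSup ((fun ν : ℝ => ‖wt ν‖) '' {ν : ℝ | 4 * ((l : ℝ) + 1) / T ≤ |ν|})) *
        ‖c j‖ - (⨆ ν : ℝ, ‖ε ν‖ / T) ≤
      ⨆ ν : ℝ, ‖H ν‖ := by
  set S : ℕ → ℝ := fun l =>
    sSup ((fun ν : ℝ => ‖wt ν‖) '' {ν : ℝ | 4 * ((l : ℝ) + 1) / T ≤ |ν|}) with hSdef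
  have hS_nonneg : ∀ l : ℕ, 0 ≤ S l := by
    intro l
    have h0 : (0 : ℝ) ≤ 4 * ((l : ℝ) + 1) / T := by positivity
    have hmem : ‖wt (4 * ((l : ℝ) + 1) / T)‖ ∈
        ((fun ν : ℝ => ‖wt ν‖) '' {ν : ℝ | 4 * ((l : ℝ) + 1) / T ≤ |ν|}) :=
      ⟨_, by simp [abs_of_nonneg h0], rfl⟩
    exact le_trans (norm_nonneg _) (le_csSup (hwt_bdd l) hmem)
  -- distances
  set d : Fin (p + 1) → ℝ := fun k => νf k - νf j with hddef
  have habs : ∀ k : Fin (p + 1), k ≠ j → 4 / T ≤ |d k| := by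
    intro k hk
    simpa [hddef] using hsep k j hk
  have hd_ne : ∀ k : Fin (p + 1), k ≠ j → d k ≠ 0 := by
    intro k hk h0
    have h1 := habs k hk
    rw [h0, abs_zero] at h1
    have h2 : (0 : ℝ) < 4 / T := by positivity
    linarith
  -- sides
  set t : Bool → Finset (Fin (p + 1)) := fun b =>
    univ.filter (fun k => k ≠ j ∧ (if b then 0 < d k else d k < 0)) with htdef
  have ht_true : ∀ k, k ∈ t true ↔ k ≠ j ∧ 0 < d k := by
    intro k; simp [htdef]
  have ht_false : ∀ k, k ∈ t false ↔ k ≠ j ∧ d k < 0 := by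
    intro k; simp [htdef]
  set a : Fin (p + 1) → ℝ := fun k => |d k| with hadef
  have ha_inj : ∀ b : Bool, ∀ k ∈ t b, ∀ k' ∈ t b, a k = a k' → k = k' := by
    intro b k hk k' hk' hakk
    by_contra hne
    have hakk' : |d k| = |d k'| := hakk
    have hd : d k = d k' := by
      cases b with
      | true =>
        rw [ht_true] at hk hk'
        rwa [abs_of_pos hk.2, abs_of_pos hk'.2] at hakk'
      | false =>
        rw [ht_false] at hk hk'
        rw [abs_of_neg hk.2, abs_of_neg hk'.2] at hakk'
        linarith
    have hν : νf k = νf k' := by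
      have h1 : νf k - νf j = νf k' - νf j := hd
      linarith
    have h2 := hsep k k' hne
    rw [hν, sub_self, abs_zero] at h2
    have h3 : (0 : ℝ) < 4 / T := by positivity
    linarith
  set sb : Bool → Finset ℝ := fun b => (t b).image a with hsbdef
  have hsb_lb : ∀ b : Bool, ∀ x ∈ sb b, 4 / T ≤ x := by
    intro b x hx
    obtain ⟨k, hk, rfl⟩ := Finset.mem_image.mp hx
    have hkj : k ≠ j := by
      cases b with
      | true => exact ((ht_true k).mp hk).1
      | false => exact ((ht_false k).mp hk).1
    exact habs k hkj
  have hsb_sep : ∀ b : Bool, ∀ x ∈ sb b, ∀ y ∈ sb b, x ≠ y → 4 / T ≤ |x - y| := by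
    intro b x hx y hy hxy
    obtain ⟨k, hk, rfl⟩ := Finset.mem_image.mp hx
    obtain ⟨k', hk', rfl⟩ := Finset.mem_image.mp hy
    have hkk' : k ≠ k' := by
      rintro rfl; exact hxy rfl
    have hsep' := hsep k k' hkk'
    have heq : |a k - a k'| = |νf k - νf k'| := by
      have hda : d k - d k' = νf k - νf k' := by simp [hddef]
      cases b with
      | true =>
        rw [ht_true] at hk hk'
        simp only [hadef]
        rw [abs_of_pos hk.2, abs_of_pos hk'.2, hda]
      | false =>
        rw [ht_false] at hk hk'
        simp only [hadef]
        rw [abs_of_neg hk.2, abs_of_neg hk'.2,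
          show -d k - -d k' = -(d k - d k') by ring, abs_neg, hda]
    rw [heq]
    exact hsep'
  -- membership of k in its side
  have hmem_t : ∀ k : Fin (p + 1), k ≠ j → k ∈ t (decide (0 < d k)) := by
    intro k hk
    rcases lt_trichotomy (d k) 0 with h | h | h
    · have hd0 : decide (0 < d k) = false := by simp [not_lt.mpr h.le]
      rw [hd0, ht_false]
      exact ⟨hk, h⟩
    · exact absurd h (hd_ne k hk)
    · have hd0 : decide (0 < d k) = true := by simp [h]
      rw [hd0, ht_true]
      exact ⟨hk, h⟩
  have hside : ∀ b : Bool, ∀ m ∈ t b, decide (0 < d m) = b := by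
    intro b m hm
    cases b with
    | true => simp [((ht_true m).mp hm).2]
    | false => simp [not_lt.mpr ((ht_false m).mp hm).2.le]
  set lv : Fin (p + 1) → ℕ := fun k =>
    ((sb (decide (0 < d k))).filter (fun y => y < a k)).card with hlvdef
  have hlk : ∀ k : Fin (p + 1), k ≠ j → 4 / T * ((lv k : ℝ) + 1) ≤ a k := by
    intro k hk
    exact sep_count (4 / T) (sb (decide (0 < d k))) (hsb_lb _) (hsb_sep _) (a k)
      (Finset.mem_image.mpr ⟨k, hmem_t k hk, rfl⟩)
  have hterm : ∀ k : Fin (p + 1), k ≠ j →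
      ‖wt (νf j - νf k)‖ ≤ S (lv k) := by
    intro k hk
    refine le_csSup (hwt_bdd (lv k)) ⟨νf j - νf k, ?_, rfl⟩
    simp only [Set.mem_setOf_eq]
    have h1 : |νf j - νf k| = a k := by
      show _ = |d k|
      rw [hddef]
      exact abs_sub_comm _ _
    rw [h1]
    calc 4 * ((lv k : ℝ) + 1) / T = 4 / T * ((lv k : ℝ) + 1) := by ring
      _ ≤ a k := hlk k hk
  -- injectivity of lv on each side
  have hlv_inj : ∀ b : Bool, ∀ k ∈ t b, ∀ k' ∈ t b, lv k = lv k' → k = k' := by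
    intro b k hk k' hk' hlkk
    by_contra hne
    have hane : a k ≠ a k' := fun h => hne (ha_inj b k hk k' hk' h)
    have main : ∀ m ∈ t b, ∀ m' ∈ t b, a m < a m' → lv m < lv m' := by
      intro m hm m' hm' hlt
      have hsub : insert (a m) ((sb b).filter (fun y => y < a m)) ⊆
          (sb b).filter (fun y => y < a m') := by
        intro y hy
        rcases Finset.mem_insert.mp hy with rfl | hy'
        · exact Finset.mem_filter.mpr ⟨Finset.mem_image.mpr ⟨m, hm, rfl⟩, hlt⟩
        · obtain ⟨hy1, hy2⟩ := Finset.mem_filter.mp hy'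
          exact Finset.mem_filter.mpr ⟨hy1, hy2.trans hlt⟩
      have hnm : a m ∉ (sb b).filter (fun y => y < a m) := by simp
      have hcc := Finset.card_le_card hsub
      rw [Finset.card_insert_of_notMem hnm] at hcc
      have e1 : lv m = ((sb b).filter (fun y => y < a m)).card := by
        show ((sb (decide (0 < d m))).filter (fun y => y < a m)).card = _
        rw [hside b m hm]
      have e2 : lv m' = ((sb b).filter (fun y => y < a m')).card := by
        show ((sb (decide (0 < d m'))).filter (fun y => y < a m')).card = _
        rw [hside b m' hm']
      omega
    rcases lt_or_gt_of_ne hane with h | h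
    · exact absurd hlkk (Nat.ne_of_lt (main k hk k' hk' h))
    · exact absurd hlkk.symm (Nat.ne_of_lt (main k' hk' k hk h))
  -- sum bound on each side
  have hside_sum : ∀ b : Bool, ∑ k ∈ t b, S (lv k) ≤ ∑' l : ℕ, S l := by
    intro b
    rw [← Finset.sum_image (f := S) (g := lv) (fun x hx y hy h => hlv_inj b x hx y hy h)]
    exact Summable.sum_le_tsum _ (fun i _ => hS_nonneg i) hwt_sum
  -- split erase j
  have hsplit : univ.erase j = t true ∪ t false := by
    ext k
    simp only [Finset.mem_erase, Finset.mem_univ, and_true, Finset.mem_union]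
    rw [ht_true, ht_false]
    constructor
    · intro hk
      rcases lt_trichotomy (d k) 0 with h | h | h
      · exact Or.inr ⟨hk, h⟩
      · exact absurd h (hd_ne k hk)
      · exact Or.inl ⟨hk, h⟩
    · rintro (⟨hk, _⟩ | ⟨hk, _⟩) <;> exact hk
  have hdisj : Disjoint (t true) (t false) := by
    rw [Finset.disjoint_left]
    intro k hk hk'
    rw [ht_true] at hk
    rw [ht_false] at hk'
    linarith [hk.2, hk'.2]
  have hW : ∑ k ∈ univ.erase j, ‖wt (νf j - νf k)‖ ≤ 2 * ∑' l : ℕ, S l := by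
    have h1 : ∑ k ∈ univ.erase j, ‖wt (νf j - νf k)‖ ≤
        ∑ k ∈ univ.erase j, S (lv k) := by
      refine Finset.sum_le_sum fun k hk => ?_
      exact hterm k (Finset.mem_erase.mp hk).1
    have h2 : ∑ k ∈ univ.erase j, S (lv k) =
        ∑ k ∈ t true, S (lv k) + ∑ k ∈ t false, S (lv k) := by
      rw [hsplit, Finset.sum_union hdisj]
    have h3 := hside_sum true
    have h4 := hside_sum false
    linarith
  -- main algebra
  set A : ℝ := ‖wt 0‖ / T with hAdef
  set Ssum : ℝ := ∑' l : ℕ, S l with hSsumdef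
  set E : ℝ := ⨆ ν : ℝ, ‖ε ν‖ / T with hEdef
  have tri : ∀ u v : ℂ, ‖u - v‖ ≤ ‖u‖ + ‖v‖ := by
    intro u v
    simpa using norm_sub_le u v
  have hsplit_sum : ∑ k, c k * wt (νf j - νf k) =
      c j * wt 0 + ∑ k ∈ univ.erase j, c k * wt (νf j - νf k) := by
    rw [← Finset.add_sum_erase _ _ (Finset.mem_univ j), sub_self]
  have key : (1 / (T : ℂ)) * (c j * wt 0) =
      H (νf j) - ε (νf j) / T - (1 / T) * ∑ k ∈ univ.erase j, c k * wt (νf j - νf k) := by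
    rw [hH (νf j), hsplit_sum]
    ring
  have habs0 : ‖(1 / (T : ℂ)) * (c j * wt 0)‖ =
      A * ‖c j‖ := by
    rw [norm_mul, norm_mul, norm_div, norm_one, Complex.norm_real, Real.norm_eq_abs, abs_of_pos hT, hAdef]
    ring
  have hεj : ‖ε (νf j)‖ / T ≤ E := le_ciSup hε_bdd (νf j)
  have hsum_bound : ‖(1 / (T : ℂ)) * ∑ k ∈ univ.erase j, c k * wt (νf j - νf k)‖ ≤
      (2 / T * Ssum) * ‖c j‖ := by
    rw [norm_mul, norm_div, norm_one, Complex.norm_real, Real.norm_eq_abs, abs_of_pos hT]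
    have h1 : ‖∑ k ∈ univ.erase j, c k * wt (νf j - νf k)‖ ≤
        ∑ k ∈ univ.erase j, ‖c k‖ * ‖wt (νf j - νf k)‖ := by
      refine le_trans (norm_sum_le _ _) ?_
      refine Finset.sum_le_sum fun k _ => ?_
      rw [norm_mul]
    have h2 : ∑ k ∈ univ.erase j, ‖c k‖ * ‖wt (νf j - νf k)‖ ≤
        ‖c j‖ * ∑ k ∈ univ.erase j, ‖wt (νf j - νf k)‖ := by
      rw [Finset.mul_sum]
      refine Finset.sum_le_sum fun k _ => ?_
      exact mul_le_mul_of_nonneg_right (hj k) (norm_nonneg _)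
    have h3 : ‖c j‖ * ∑ k ∈ univ.erase j, ‖wt (νf j - νf k)‖ ≤
        ‖c j‖ * (2 * Ssum) :=
      mul_le_mul_of_nonneg_left hW (norm_nonneg _)
    have h4 : (1 / T : ℝ) * ‖∑ k ∈ univ.erase j, c k * wt (νf j - νf k)‖ ≤
        (1 / T) * (‖c j‖ * (2 * Ssum)) := by
      refine mul_le_mul_of_nonneg_left ?_ (by positivity)
      linarith
    calc (1 / T : ℝ) * ‖∑ k ∈ univ.erase j, c k * wt (νf j - νf k)‖ ≤
        (1 / T) * (‖c j‖ * (2 * Ssum)) := h4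
      _ = (2 / T * Ssum) * ‖c j‖ := by ring
  have hεjdiv : ‖ε (νf j) / T‖ = ‖ε (νf j)‖ / T := by
    rw [norm_div, Complex.norm_real, Real.norm_eq_abs, abs_of_pos hT]
  have first : A * ‖c j‖ ≤
      ‖H (νf j)‖ + (2 / T * Ssum) * ‖c j‖ + E := by
    have htri : ‖(1 / (T : ℂ)) * (c j * wt 0)‖ ≤
        ‖H (νf j)‖ + ‖ε (νf j) / T‖ +
          ‖(1 / (T : ℂ)) * ∑ k ∈ univ.erase j, c k * wt (νf j - νf k)‖ := by
      rw [key]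
      have t1 := tri (H (νf j) - ε (νf j) / T)
        ((1 / (T : ℂ)) * ∑ k ∈ univ.erase j, c k * wt (νf j - νf k))
      have t2 := tri (H (νf j)) (ε (νf j) / T)
      linarith
    rw [habs0, hεjdiv] at htri
    linarith [hsum_bound, hεj]
  refine ⟨first, ?_⟩
  have hHsup : ‖H (νf j)‖ ≤ ⨆ ν : ℝ, ‖H ν‖ := le_ciSup hH_bdd (νf j)
  have hexp : (A - 2 / T * Ssum) * ‖c j‖ =
      A * ‖c j‖ - (2 / T * Ssum) * ‖c j‖ := by ring
  linarith [first, hHsup, hexp.le, hexp.ge]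
end
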